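/- Let V and W be finite-dimensional complex vector spaces, let N ≥ 1, and let f_0, …, f_{N−1} : V → W be linear maps such that the map Φ : V → W ⊗_ℂ A_N, Φ(v) = Σ_{i=0}^{N−1} f_i(v) ⊗ t^i, is injective and its image is invariant under multiplication by t. Then there exists φ ∈ End(V) with φ^N = 0 such that f_i = f_{N−1} ∘ φ^{N−1−i} for all i = 0, …, N−1. -/

import Mathlib

set_option synthInstance.maxHeartbeats 1000000
set_option maxHeartbeats 1000000

open Polynomial Finset TensorProduct

/-- The truncated polynomial ring `A_N = ℂ[t]/(t^N)`. -/
abbrev AN (N : ℕ) : Type := Polynomial ℂ ⧸ Ideal.span {(X : Polynomial ℂ) ^ N}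

/-- The class of `t` in `A_N`. -/
noncomputable def tbar (N : ℕ) : AN N := Ideal.Quotient.mk _ X

noncomputable def anPB (N : ℕ) : PowerBasis ℂ (AN N) :=
  AdjoinRoot.powerBasis (f := (X : Polynomial ℂ) ^ N) (pow_ne_zero N Polynomial.X_ne_zero)

lemma anPB_dim (N : ℕ) : (anPB N).dim = N := by
  simp [anPB, AdjoinRoot.powerBasis_dim]

lemma anPB_basis_eq (N : ℕ) (i : Fin (anPB N).dim) :
    (anPB N).basis i = tbar N ^ (i : ℕ) := by
  rw [PowerBasis.basis_eq_pow]
  congr 1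

lemma tbar_pow_eq_zero (N : ℕ) {i : ℕ} (hi : N ≤ i) : tbar N ^ i = 0 := by
  have h : tbar N ^ N = 0 := by
    rw [tbar, ← map_pow, Ideal.Quotient.eq_zero_iff_mem]
    exact Ideal.subset_span rfl
  calc tbar N ^ i = tbar N ^ N * tbar N ^ (i - N) := by rw [← pow_add]; congr 1; omega
  _ = 0 := by rw [h, zero_mul]

lemma coord_tbar_pow (N : ℕ) (j : Fin N) (i : ℕ) :
    (anPB N).basis.coord (Fin.cast (anPB_dim N).symm j) (tbar N ^ i) =
      if i = (j : ℕ) then 1 else 0 := by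
  rcases lt_or_ge i N with hi | hi
  · have : tbar N ^ i = (anPB N).basis (Fin.cast (anPB_dim N).symm ⟨i, hi⟩) := by
      rw [anPB_basis_eq, Fin.coe_cast]
    rw [this, Module.Basis.coord_apply, Module.Basis.repr_self_apply]
    simp [Fin.ext_iff]
  · rw [tbar_pow_eq_zero N hi, map_zero]
    have : i ≠ (j : ℕ) := by omega
    simp [this]

theorem stmt4 (N : ℕ) (hN : 1 ≤ N) (V W : Type) [AddCommGroup V] [Module ℂ V]
    [FiniteDimensional ℂ V] [AddCommGroup W] [Module ℂ W] [FiniteDimensional ℂ W]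
    (f : ℕ → (V →ₗ[ℂ] W))
    (Φ : V → W ⊗[ℂ] AN N)
    (hΦ : ∀ v, Φ v = ∑ i ∈ Finset.range N, (f i v) ⊗ₜ[ℂ] (tbar N ^ i))
    (hinj : Function.Injective Φ)
    (hinv : ∀ v : V, ∃ v' : V,
      LinearMap.lTensor W (LinearMap.mulLeft ℂ (tbar N)) (Φ v) = Φ v') :
    ∃ φ : V →ₗ[ℂ] V, φ ^ N = 0 ∧
      ∀ i < N, f i = (f (N - 1)).comp (φ ^ (N - 1 - i)) := by
  classical
  set T := LinearMap.lTensor W (LinearMap.mulLeft ℂ (tbar N)) with hT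
  let ε : Fin N → (W ⊗[ℂ] AN N →ₗ[ℂ] W) := fun j =>
    (TensorProduct.rid ℂ W).toLinearMap ∘ₗ
      LinearMap.lTensor W ((anPB N).basis.coord (Fin.cast (anPB_dim N).symm j))
  have hε_tmul : ∀ (j : Fin N) (w : W) (i : ℕ),
      ε j (w ⊗ₜ[ℂ] (tbar N ^ i)) = if i = (j : ℕ) then w else 0 := by
    intro j w i
    simp only [ε, LinearMap.comp_apply, LinearMap.lTensor_tmul, coord_tbar_pow,
      LinearEquiv.coe_toLinearMap]
    split <;> simp [TensorProduct.rid_tmul]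
  have hεΦ : ∀ (j : Fin N) (v : V), ε j (Φ v) = f (j : ℕ) v := by
    intro j v
    rw [hΦ, map_sum, Finset.sum_congr rfl (fun i _ => hε_tmul j (f i v) i)]
    rw [Finset.sum_ite_eq' (Finset.range N) (j : ℕ) (fun i => f i v)]
    simp [j.isLt]
  have hεT : ∀ (j : Fin N) (v : V),
      ε j (T (Φ v)) = if (j : ℕ) = 0 then 0 else f ((j : ℕ) - 1) v := by
    intro j v
    rw [hΦ, map_sum, map_sum]
    have step : ∀ i ∈ Finset.range N, ε j (T ((f i v) ⊗ₜ[ℂ] (tbar N ^ i)))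
        = if i + 1 = (j : ℕ) then f i v else 0 := by
      intro i _
      rw [hT, LinearMap.lTensor_tmul, LinearMap.mulLeft_apply, ← pow_succ']
      exact hε_tmul j (f i v) (i + 1)
    rw [Finset.sum_congr rfl step]
    rcases Nat.eq_zero_or_pos (j : ℕ) with h0 | h0
    · rw [if_pos h0]
      apply Finset.sum_eq_zero
      intro i _
      rw [if_neg (by omega)]
    · rw [if_neg (by omega)]
      rw [Finset.sum_eq_single ((j : ℕ) - 1)]
      · rw [if_pos (by omega)]
      · intro b _ hb
        rw [if_neg (by omega)]
      · intro hmem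
        exact absurd (Finset.mem_range.mpr (by have := j.isLt; omega)) hmem
  have Φadd : ∀ a b, Φ (a + b) = Φ a + Φ b := by
    intro a b
    simp [hΦ, map_add, add_tmul, Finset.sum_add_distrib]
  have Φsmul : ∀ (c : ℂ) a, Φ (c • a) = c • Φ a := by
    intro c a
    simp [hΦ, map_smul, smul_tmul', Finset.smul_sum]
  choose g hg using hinv
  let φ : V →ₗ[ℂ] V :=
    { toFun := g
      map_add' := fun a b => hinj (by
        rw [← hg (a + b), Φadd (g a) (g b), ← hg a, ← hg b, Φadd a b, map_add])
      map_smul' := fun c a => hinj (by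
        dsimp only [RingHom.id_apply]
        rw [← hg (c • a), Φsmul c (g a), ← hg a, Φsmul c a, map_smul]) }
  have key : ∀ (v : V) (j : ℕ), j < N → f j (φ v) = if j = 0 then 0 else f (j - 1) v := by
    intro v j hj
    have h := hεT ⟨j, hj⟩ v
    rw [hg v] at h
    rw [hεΦ ⟨j, hj⟩ (g v)] at h
    exact h
  have key1 : ∀ j, j + 1 < N → (f (j + 1)).comp φ = f j := by
    intro j hj
    ext v
    have := key v (j + 1) hj
    simpa using this
  have key0 : (f 0).comp φ = 0 := by
    ext v
    simpa using key v 0 (by omega)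
  have main : ∀ k, ∀ i, i + k = N - 1 → f i = (f (N - 1)).comp (φ ^ k) := by
    intro k
    induction k with
    | zero =>
      intro i hi
      have : i = N - 1 := by omega
      subst this
      ext v
      simp [Module.End.one_eq_id]
    | succ k ih =>
      intro i hi
      have h1 : (f (i + 1)).comp φ = f i := key1 i (by omega)
      have h2 : f (i + 1) = (f (N - 1)).comp (φ ^ k) := ih (i + 1) (by omega)
      rw [← h1, h2, pow_succ]
      rfl
  have nil : ∀ i, i < N → (f i).comp (φ ^ (i + 1)) = 0 := by
    intro i
    induction i with
    | zero => intro _; simpa [pow_one] using key0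
    | succ n ih =>
      intro hi
      have h := key1 n (by omega)
      calc (f (n + 1)).comp (φ ^ (n + 2))
          = ((f (n + 1)).comp φ).comp (φ ^ (n + 1)) := by rw [pow_succ']; rfl
        _ = 0 := by rw [h, ih (by omega)]
  have zero_of : ∀ v : V, (∀ i < N, f i v = 0) → v = 0 := by
    intro v hv
    apply hinj
    rw [hΦ, hΦ]
    apply Finset.sum_congr rfl
    intro i hi
    rw [hv i (Finset.mem_range.mp hi), map_zero]
  refine ⟨φ, ?_, fun i hi => main (N - 1 - i) i (by omega)⟩
  ext v
  rw [LinearMap.zero_apply]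
  apply zero_of
  intro i hi
  have hsplit : φ ^ N = (φ ^ (i + 1)) * (φ ^ (N - i - 1)) := by
    rw [← pow_add]; congr 1; omega
  rw [hsplit]
  calc f i (((φ ^ (i + 1)) * (φ ^ (N - i - 1))) v)
      = ((f i).comp (φ ^ (i + 1))) ((φ ^ (N - i - 1)) v) := rfl
    _ = 0 := by rw [nil i hi]; rfl
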